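/- Let $V$ be a finite nonempty set, $p \in [0,1]$, and let $V_p$ be the random binomial subset of $V$ including each element independently with probability $p$. Let $w : \mathcal{P}(V) \to \mathbb{R}_{\ge 0}$ be a weight function, set $X = \sum_{A \subseteq V} w(A) \mathbf{1}[A \subseteq V_p]$, and set $\Delta = \sum_{A \cap B \neq \emptyset} w(A) w(B) \, \mathbb{P}(A \cup B \subseteq V_p)$, the sum over ordered pairs $(A,B)$ of subsets with $A \cap B \neq \emptyset$. Then for every $t \in [0, \mathbb{E}X]$, $\mathbb{P}(X \le \mathbb{E}X - t) \le \exp(-t^2 / (2\Delta))$. -/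

import Mathlib

open Finset

namespace Janson

variable {V : Type*} [DecidableEq V]
set_option linter.unusedSectionVars false

noncomputable def nu (p : ℝ) (G U : Finset V) : ℝ := p ^ U.card * (1 - p) ^ (G.card - U.card)

lemma nu_nonneg {p : ℝ} (h0 : 0 ≤ p) (h1 : p ≤ 1) (G U : Finset V) : 0 ≤ nu p G U :=
  mul_nonneg (pow_nonneg h0 _) (pow_nonneg (by linarith) _)

lemma sum_nu (p : ℝ) (G : Finset V) : ∑ U ∈ G.powerset, nu p G U = 1 := by
  induction G using Finset.induction_on with
  | empty => simp [nu]
  | @insert a G ha ih =>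
    rw [Finset.sum_powerset_insert ha]
    have h1 : ∀ U ∈ G.powerset, nu p (insert a G) U = (1 - p) * nu p G U := by
      intro U hU
      have hUc : U.card ≤ G.card := card_le_card (mem_powerset.1 hU)
      have : (insert a G).card - U.card = (G.card - U.card) + 1 := by
        rw [card_insert_of_notMem ha]; omega
      rw [nu, nu, this, pow_succ]; ring
    have h2 : ∀ U ∈ G.powerset, nu p (insert a G) (insert a U) = p * nu p G U := by
      intro U hU
      have haU : a ∉ U := fun h => ha (mem_powerset.1 hU h)
      have hUc : U.card ≤ G.card := card_le_card (mem_powerset.1 hU)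
      rw [nu, nu, card_insert_of_notMem haU, card_insert_of_notMem ha]
      have : G.card + 1 - (U.card + 1) = G.card - U.card := by omega
      rw [this, pow_succ]; ring
    rw [Finset.sum_congr rfl h1, Finset.sum_congr rfl h2, ← Finset.mul_sum, ← Finset.mul_sum, ih]
    ring

lemma nu_split {p : ℝ} {S G T : Finset V} (hS : S ⊆ G) (hT : T ⊆ G) :
    nu p G T = nu p S (T ∩ S) * nu p (G \ S) (T \ S) := by
  have h1 : (T ∩ S).card + (T \ S).card = T.card := card_inter_add_card_sdiff T S
  have h2 : (T ∩ S).card ≤ S.card := card_le_card inter_subset_right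
  have h3 : (T \ S).card ≤ (G \ S).card := card_le_card (sdiff_subset_sdiff hT (by rfl))
  have h4 : (G \ S).card = G.card - S.card := card_sdiff_of_subset hS
  have h5 : S.card ≤ G.card := card_le_card hS
  have h6 : T.card ≤ G.card := card_le_card hT
  have e1 : T.card = (T ∩ S).card + (T \ S).card := h1.symm
  have e2 : G.card - T.card = (S.card - (T ∩ S).card) + ((G \ S).card - (T \ S).card) := by omega
  rw [nu, nu, nu, e2, e1, pow_add, pow_add]; ring

lemma split {p : ℝ} {S G : Finset V} (hS : S ⊆ G) (f : Finset V → ℝ) :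
    ∑ U ∈ G.powerset, nu p G U * f U =
      ∑ R ∈ S.powerset, ∑ U ∈ (G \ S).powerset, nu p S R * nu p (G \ S) U * f (R ∪ U) := by
  rw [← Finset.sum_product']
  apply Finset.sum_nbij' (i := fun T => (T ∩ S, T \ S)) (j := fun z => z.1 ∪ z.2)
  · intro T hT
    simp only [Finset.mem_product, mem_powerset]
    exact ⟨inter_subset_right, sdiff_subset_sdiff (mem_powerset.1 hT) (by rfl)⟩
  · intro z hz
    simp only [Finset.mem_product, mem_powerset] at hz ⊢
    exact union_subset (hz.1.trans hS) (hz.2.trans sdiff_subset)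
  · intro T _
    ext x; simp only [mem_union, mem_inter, mem_sdiff]; tauto
  · intro z hz
    simp only [Finset.mem_product, mem_powerset] at hz
    have h1 : ∀ x ∈ z.2, x ∉ S := fun x hx => (mem_sdiff.1 (hz.2 hx)).2
    have h2 : ∀ x ∈ z.1, x ∈ S := fun x hx => hz.1 hx
    have e1 : (z.1 ∪ z.2) ∩ S = z.1 := by
      ext x; simp only [mem_inter, mem_union]
      constructor
      · rintro ⟨h | h, hxS⟩
        · exact h
        · exact absurd hxS (h1 x h)
      · intro h; exact ⟨Or.inl h, h2 x h⟩
    have e2 : (z.1 ∪ z.2) \ S = z.2 := by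
      ext x; simp only [mem_sdiff, mem_union]
      constructor
      · rintro ⟨h | h, hxS⟩
        · exact absurd (h2 x h) hxS
        · exact h
      · intro h; exact ⟨Or.inr h, h1 x h⟩
    rw [e1, e2]
  · intro T hT
    rw [nu_split hS (mem_powerset.1 hT)]
    have : (T ∩ S) ∪ (T \ S) = T := by
      ext x; simp only [mem_union, mem_inter, mem_sdiff]; tauto
    rw [this]


lemma nu_self (p : ℝ) (S : Finset V) : nu p S S = p ^ S.card := by
  simp [nu]

lemma cond {p : ℝ} {S G : Finset V} (hS : S ⊆ G) (h : Finset V → ℝ) :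
    ∑ U ∈ G.powerset, nu p G U * (if S ⊆ U then h (U \ S) else 0) =
      p ^ S.card * ∑ U ∈ (G \ S).powerset, nu p (G \ S) U * h U := by
  rw [split hS]
  rw [Finset.sum_eq_single_of_mem S (mem_powerset_self S)]
  · rw [Finset.mul_sum]
    apply Finset.sum_congr rfl
    intro U hU
    have hUS : Disjoint S U :=
      disjoint_of_subset_right (mem_powerset.1 hU) sdiff_disjoint.symm
    have h1 : S ⊆ S ∪ U := subset_union_left
    have h2 : (S ∪ U) \ S = U := by
      rw [union_sdiff_cancel_left hUS]
    rw [if_pos h1, h2, nu_self]; ring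
  · intro R hR hRne
    apply Finset.sum_eq_zero
    intro U hU
    have hRS : R ⊆ S := mem_powerset.1 hR
    obtain ⟨x, hxS, hxR⟩ := exists_of_ssubset (hRS.ssubset_of_ne hRne)
    have : ¬ S ⊆ R ∪ U := by
      intro hsub
      rcases mem_union.1 (hsub hxS) with h | h
      · exact hxR h
      · exact (mem_sdiff.1 (mem_powerset.1 hU h)).2 hxS
    rw [if_neg this, mul_zero]


lemma harris {p : ℝ} (hp0 : 0 ≤ p) (hp1 : p ≤ 1) {S G : Finset V} (hS : S ⊆ G)
    (g : Finset V → ℝ) (hga : ∀ ⦃U U'⦄, U ⊆ U' → g U' ≤ g U) :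
    ∑ U ∈ G.powerset, nu p G U * (if S ⊆ U then g U else 0) ≤
      p ^ S.card * ∑ U ∈ G.powerset, nu p G U * g U := by
  have hL : ∑ U ∈ G.powerset, nu p G U * (if S ⊆ U then g U else 0) =
      p ^ S.card * ∑ U ∈ (G \ S).powerset, nu p (G \ S) U * g (S ∪ U) := by
    rw [← cond hS (fun W => g (S ∪ W))]
    apply Finset.sum_congr rfl
    intro U _
    congr 1
    split_ifs with h
    · rw [union_sdiff_of_subset h]
    · rfl
  rw [hL, split hS g]
  apply mul_le_mul_of_nonneg_left _ (pow_nonneg hp0 _)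
  calc ∑ U ∈ (G \ S).powerset, nu p (G \ S) U * g (S ∪ U)
      = ∑ R ∈ S.powerset, nu p S R * ∑ U ∈ (G \ S).powerset, nu p (G \ S) U * g (S ∪ U) := by
        rw [← Finset.sum_mul, sum_nu, one_mul]
    _ ≤ ∑ R ∈ S.powerset, ∑ U ∈ (G \ S).powerset, nu p S R * nu p (G \ S) U * g (R ∪ U) := by
        apply Finset.sum_le_sum
        intro R hR
        rw [Finset.mul_sum]
        apply Finset.sum_le_sum
        intro U hU
        rw [← mul_assoc]
        apply mul_le_mul_of_nonneg_left _ (mul_nonneg (nu_nonneg hp0 hp1 _ _) (nu_nonneg hp0 hp1 _ _))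
        exact hga (union_subset_union_left ((mem_powerset.1 hR)) )



variable [Fintype V]


noncomputable def XX (w : Finset V → ℝ) (T : Finset V) : ℝ :=
  ∑ A ∈ (univ : Finset V).powerset, if A ⊆ T then w A else 0

noncomputable def SA (p : ℝ) (w : Finset V → ℝ) (A : Finset V) : ℝ :=
  ∑ B ∈ (univ : Finset V).powerset, if (A ∩ B).Nonempty then w B * p ^ (A ∪ B).card else 0

noncomputable def psi (p : ℝ) (w : Finset V → ℝ) (s : ℝ) : ℝ :=
  ∑ T ∈ (univ : Finset V).powerset, nu p univ T * Real.exp (-(s * XX w T))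

lemma XX_nonneg {w : Finset V → ℝ} (hw : ∀ A, 0 ≤ w A) (T : Finset V) : 0 ≤ XX w T := by
  apply Finset.sum_nonneg; intro A _; split_ifs; exacts [hw A, le_rfl]

lemma psi_nonneg {p : ℝ} (hp0 : 0 ≤ p) (hp1 : p ≤ 1) (w : Finset V → ℝ) (s : ℝ) :
    0 ≤ psi p w s := by
  apply Finset.sum_nonneg; intro T _
  exact mul_nonneg (nu_nonneg hp0 hp1 _ _) (Real.exp_nonneg _)


lemma perA {p : ℝ} (hp0 : 0 ≤ p) (hp1 : p ≤ 1) {w : Finset V → ℝ} (hw : ∀ A, 0 ≤ w A)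
    {s : ℝ} (hs : 0 ≤ s) (A : Finset V) :
    psi p w s * (p ^ A.card - s * SA p w A) ≤
      ∑ T ∈ (univ : Finset V).powerset,
        nu p univ T * (if A ⊆ T then Real.exp (-(s * XX w T)) else 0) := by
  classical
  set Z : Finset V → ℝ := fun U => ∑ B ∈ (univ : Finset V).powerset,
      if ¬(A ∩ B).Nonempty ∧ B ⊆ U then w B else 0 with hZ
  set Y : Finset V → ℝ := fun T => ∑ B ∈ (univ : Finset V).powerset,
      if (A ∩ B).Nonempty ∧ B ⊆ T then w B else 0 with hY
  set W : ℝ := ∑ U ∈ ((univ : Finset V) \ A).powerset,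
      nu p (univ \ A) U * Real.exp (-(s * Z U)) with hWdef
  have hZnn : ∀ U, 0 ≤ Z U := by
    intro U; apply Finset.sum_nonneg; intro B _; split_ifs; exacts [hw B, le_rfl]
  have hYnn : ∀ T, 0 ≤ Y T := by
    intro T; apply Finset.sum_nonneg; intro B _; split_ifs; exacts [hw B, le_rfl]
  have hZmono : ∀ ⦃U U'⦄, U ⊆ U' → Z U ≤ Z U' := by
    intro U U' hUU'
    apply Finset.sum_le_sum; intro B _
    by_cases h : ¬(A ∩ B).Nonempty ∧ B ⊆ U
    · rw [if_pos h, if_pos ⟨h.1, h.2.trans hUU'⟩]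
    · rw [if_neg h]; split_ifs with h2; exacts [hw B, le_rfl]
  have hganti : ∀ ⦃U U'⦄, U ⊆ U' →
      Real.exp (-(s * Z U')) ≤ Real.exp (-(s * Z U)) := by
    intro U U' h
    apply Real.exp_le_exp.2
    have := mul_le_mul_of_nonneg_left (hZmono h) hs
    linarith
  have hXsplit : ∀ T, XX w T = Y T + Z (T \ A) := by
    intro T
    rw [XX, hY, hZ, ← Finset.sum_add_distrib]
    apply Finset.sum_congr rfl; intro B _
    by_cases hne : (A ∩ B).Nonempty
    · by_cases hBT : B ⊆ T
      · rw [if_pos hBT, if_pos ⟨hne, hBT⟩, if_neg (by tauto), add_zero]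
      · rw [if_neg hBT, if_neg (by tauto),
          if_neg (fun h => hBT (h.2.trans sdiff_subset)), add_zero]
    · have hdisj : Disjoint B A :=
        (disjoint_iff_inter_eq_empty.2 (not_nonempty_iff_eq_empty.1 hne)).symm
      have hiff : B ⊆ T \ A ↔ B ⊆ T := by rw [subset_sdiff]; exact and_iff_left hdisj
      by_cases hBT : B ⊆ T
      · rw [if_pos hBT, if_neg (by tauto), if_pos ⟨hne, hiff.2 hBT⟩, zero_add]
      · rw [if_neg hBT, if_neg (by tauto), if_neg (fun h => hBT (hiff.1 h.2)), add_zero]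
  have hZleX : ∀ T, Z (T \ A) ≤ XX w T := by
    intro T; rw [hXsplit T]; linarith [hYnn T]
  have hRU : ∀ R ∈ A.powerset, ∀ U ∈ ((univ : Finset V) \ A).powerset, (R ∪ U) \ A = U := by
    intro R hR U hU
    have hRA : R ⊆ A := mem_powerset.1 hR
    have hUA : Disjoint U A := disjoint_of_subset_left (mem_powerset.1 hU) sdiff_disjoint
    ext x; simp only [mem_sdiff, mem_union]
    constructor
    · rintro ⟨h | h, hx⟩
      · exact absurd (hRA h) hx
      · exact h
    · intro hx; exact ⟨Or.inr hx, disjoint_left.1 hUA hx⟩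
  have hpsiW : psi p w s ≤ W := by
    calc psi p w s ≤ ∑ T ∈ (univ : Finset V).powerset,
        nu p univ T * Real.exp (-(s * Z (T \ A))) := by
          apply Finset.sum_le_sum; intro T _
          apply mul_le_mul_of_nonneg_left _ (nu_nonneg hp0 hp1 _ _)
          apply Real.exp_le_exp.2
          have := mul_le_mul_of_nonneg_left (hZleX T) hs
          linarith
      _ = W := by
          rw [split (subset_univ A) (fun T => Real.exp (-(s * Z (T \ A))))]
          calc ∑ R ∈ A.powerset, ∑ U ∈ ((univ : Finset V) \ A).powerset,
              nu p A R * nu p (univ \ A) U * Real.exp (-(s * Z ((R ∪ U) \ A)))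
              = ∑ R ∈ A.powerset, nu p A R * W := by
                apply Finset.sum_congr rfl; intro R hR
                rw [hWdef, Finset.mul_sum]
                apply Finset.sum_congr rfl; intro U hU
                rw [hRU R hR U hU]; ring
            _ = W := by rw [← Finset.sum_mul, sum_nu, one_mul]
  have hWnn : 0 ≤ W := by
    apply Finset.sum_nonneg; intro U _
    exact mul_nonneg (nu_nonneg hp0 hp1 _ _) (Real.exp_nonneg _)
  have hT1 : ∑ T ∈ (univ : Finset V).powerset,
      nu p univ T * (if A ⊆ T then Real.exp (-(s * Z (T \ A))) else 0) = p ^ A.card * W := by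
    exact cond (subset_univ A) (fun U => Real.exp (-(s * Z U)))
  set T2 : ℝ := ∑ T ∈ (univ : Finset V).powerset,
      nu p univ T * (if A ⊆ T then Y T * Real.exp (-(s * Z (T \ A))) else 0) with hT2def
  have hT2 : T2 ≤ SA p w A * W := by
    have step1 : T2 = ∑ B ∈ (univ : Finset V).powerset, (if (A ∩ B).Nonempty then
        w B * ∑ T ∈ (univ : Finset V).powerset,
          nu p univ T * (if A ∪ B ⊆ T then Real.exp (-(s * Z (T \ A))) else 0) else 0) := by
      rw [hT2def]
      have perT : ∀ T ∈ (univ : Finset V).powerset,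
          nu p univ T * (if A ⊆ T then Y T * Real.exp (-(s * Z (T \ A))) else 0) =
          ∑ B ∈ (univ : Finset V).powerset, (if (A ∩ B).Nonempty then
            w B * (nu p univ T * (if A ∪ B ⊆ T then Real.exp (-(s * Z (T \ A))) else 0)) else 0) := by
        intro T _
        by_cases hA : A ⊆ T
        · rw [if_pos hA, hY]
          rw [show (∑ B ∈ (univ : Finset V).powerset, if (A ∩ B).Nonempty ∧ B ⊆ T then w B else 0) *
              Real.exp (-(s * Z (T \ A))) = ∑ B ∈ (univ : Finset V).powerset,
              (if (A ∩ B).Nonempty ∧ B ⊆ T then w B else 0) * Real.exp (-(s * Z (T \ A))) from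
              Finset.sum_mul .., Finset.mul_sum]
          apply Finset.sum_congr rfl; intro B _
          by_cases hne : (A ∩ B).Nonempty
          · by_cases hBT : B ⊆ T
            · rw [if_pos ⟨hne, hBT⟩, if_pos hne, if_pos (union_subset hA hBT)]; ring
            · rw [if_neg (by tauto), if_pos hne,
                if_neg (fun h => hBT (subset_union_right.trans h))]; ring
          · rw [if_neg (by tauto), if_neg hne]; ring
        · rw [if_neg hA, mul_zero]
          symm; apply Finset.sum_eq_zero; intro B _
          split_ifs with h1 h2
          · exact absurd (subset_union_left.trans h2) hA
          · ring
          · rfl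
      rw [Finset.sum_congr rfl perT, Finset.sum_comm]
      apply Finset.sum_congr rfl; intro B _
      by_cases hne : (A ∩ B).Nonempty
      · simp only [if_pos hne, Finset.mul_sum]
      · simp only [if_neg hne, Finset.sum_const_zero]
    have step2 : ∀ B : Finset V, ∑ T ∈ (univ : Finset V).powerset,
        nu p univ T * (if A ∪ B ⊆ T then Real.exp (-(s * Z (T \ A))) else 0) ≤
        p ^ (A ∪ B).card * W := by
      intro B
      have hcond : ∀ T : Finset V, (if A ∪ B ⊆ T then Real.exp (-(s * Z (T \ A))) else 0) =
          (if A ⊆ T then (if B \ A ⊆ T \ A then Real.exp (-(s * Z (T \ A))) else 0) else 0) := by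
        intro T
        have hiff : A ∪ B ⊆ T ↔ A ⊆ T ∧ B \ A ⊆ T \ A := by
          constructor
          · intro h
            refine ⟨subset_union_left.trans h, ?_⟩
            intro x hx
            rw [mem_sdiff] at hx ⊢
            exact ⟨h (mem_union_right _ hx.1), hx.2⟩
          · rintro ⟨h1, h2⟩ x hx
            rcases mem_union.1 hx with h | h
            · exact h1 h
            · by_cases hxA : x ∈ A
              · exact h1 hxA
              · exact (mem_sdiff.1 (h2 (mem_sdiff.2 ⟨h, hxA⟩))).1
        by_cases h1 : A ⊆ T
        · by_cases h2 : B \ A ⊆ T \ A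
          · rw [if_pos (hiff.2 ⟨h1, h2⟩), if_pos h1, if_pos h2]
          · rw [if_neg (fun h => h2 (hiff.1 h).2), if_pos h1, if_neg h2]
        · rw [if_neg (fun h => h1 (hiff.1 h).1), if_neg h1]
      calc ∑ T ∈ (univ : Finset V).powerset,
          nu p univ T * (if A ∪ B ⊆ T then Real.exp (-(s * Z (T \ A))) else 0)
          = p ^ A.card * ∑ U ∈ ((univ : Finset V) \ A).powerset,
            nu p (univ \ A) U * (if B \ A ⊆ U then Real.exp (-(s * Z U)) else 0) := by
            rw [show (∑ T ∈ (univ : Finset V).powerset,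
              nu p univ T * (if A ∪ B ⊆ T then Real.exp (-(s * Z (T \ A))) else 0)) =
              ∑ T ∈ (univ : Finset V).powerset, nu p univ T *
              (if A ⊆ T then (fun U => if B \ A ⊆ U then Real.exp (-(s * Z U)) else 0) (T \ A) else 0)
              from Finset.sum_congr rfl (fun T _ => by rw [hcond T])]
            exact cond (subset_univ A) (fun U => if B \ A ⊆ U then Real.exp (-(s * Z U)) else 0)
        _ ≤ p ^ A.card * (p ^ (B \ A).card * W) := by
            apply mul_le_mul_of_nonneg_left _ (pow_nonneg hp0 _)
            rw [hWdef]
            exact harris hp0 hp1 (sdiff_subset_sdiff (subset_univ B) le_rfl)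
              (fun U => Real.exp (-(s * Z U))) hganti
        _ = p ^ (A ∪ B).card * W := by
            rw [← mul_assoc, ← pow_add]
            congr 2
            rw [show (A ∪ B) = B ∪ A from union_comm A B, ← card_sdiff_add_card B A]
            omega
    calc T2 ≤ ∑ B ∈ (univ : Finset V).powerset, (if (A ∩ B).Nonempty then
        w B * (p ^ (A ∪ B).card * W) else 0) := by
          rw [step1]
          apply Finset.sum_le_sum; intro B _
          split_ifs with hne
          · exact mul_le_mul_of_nonneg_left (step2 B) (hw B)
          · exact le_rfl
      _ = SA p w A * W := by
          rw [SA, Finset.sum_mul]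
          apply Finset.sum_congr rfl; intro B _
          split_ifs with hne
          · ring
          · rw [zero_mul]
  have hg1nn : 0 ≤ ∑ T ∈ (univ : Finset V).powerset,
      nu p univ T * (if A ⊆ T then Real.exp (-(s * XX w T)) else 0) := by
    apply Finset.sum_nonneg; intro T _
    apply mul_nonneg (nu_nonneg hp0 hp1 _ _)
    split_ifs; exacts [Real.exp_nonneg _, le_rfl]
  have main : W * (p ^ A.card - s * SA p w A) ≤ ∑ T ∈ (univ : Finset V).powerset,
      nu p univ T * (if A ⊆ T then Real.exp (-(s * XX w T)) else 0) := by
    have hmid : ∑ T ∈ (univ : Finset V).powerset,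
        nu p univ T * (if A ⊆ T then (1 - s * Y T) * Real.exp (-(s * Z (T \ A))) else 0) =
        (∑ T ∈ (univ : Finset V).powerset,
          nu p univ T * (if A ⊆ T then Real.exp (-(s * Z (T \ A))) else 0)) - s * T2 := by
      rw [hT2def, Finset.mul_sum, ← Finset.sum_sub_distrib]
      apply Finset.sum_congr rfl; intro T _
      split_ifs with h
      · ring
      · ring
    calc W * (p ^ A.card - s * SA p w A) = p ^ A.card * W - s * (SA p w A * W) := by ring
      _ ≤ p ^ A.card * W - s * T2 := by
          have := mul_le_mul_of_nonneg_left hT2 hs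
          linarith
      _ = ∑ T ∈ (univ : Finset V).powerset,
          nu p univ T * (if A ⊆ T then (1 - s * Y T) * Real.exp (-(s * Z (T \ A))) else 0) := by
          rw [hmid, hT1]
      _ ≤ ∑ T ∈ (univ : Finset V).powerset,
          nu p univ T * (if A ⊆ T then Real.exp (-(s * XX w T)) else 0) := by
          apply Finset.sum_le_sum; intro T _
          apply mul_le_mul_of_nonneg_left _ (nu_nonneg hp0 hp1 _ _)
          by_cases hA : A ⊆ T
          · rw [if_pos hA, if_pos hA, hXsplit T,
              show -(s * (Y T + Z (T \ A))) = -(s * Y T) + -(s * Z (T \ A)) by ring,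
              Real.exp_add]
            apply mul_le_mul_of_nonneg_right _ (Real.exp_nonneg _)
            have := Real.add_one_le_exp (-(s * Y T))
            linarith
          · rw [if_neg hA, if_neg hA]
  by_cases hc : 0 ≤ p ^ A.card - s * SA p w A
  · exact le_trans (mul_le_mul_of_nonneg_right hpsiW hc) main
  · have h1 : psi p w s * (p ^ A.card - s * SA p w A) ≤ 0 :=
      mul_nonpos_of_nonneg_of_nonpos (psi_nonneg hp0 hp1 w s) (le_of_not_ge hc)
    linarith


lemma EXeq (p : ℝ) (w : Finset V → ℝ) :
    ∑ T ∈ (univ : Finset V).powerset, nu p univ T * XX w T =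
      ∑ A ∈ (univ : Finset V).powerset, w A * p ^ A.card := by
  have h1 : ∀ T ∈ (univ : Finset V).powerset, nu p univ T * XX w T =
      ∑ A ∈ (univ : Finset V).powerset, nu p univ T * (if A ⊆ T then w A else 0) := by
    intro T _; rw [XX, Finset.mul_sum]
  rw [Finset.sum_congr rfl h1, Finset.sum_comm]
  apply Finset.sum_congr rfl; intro A _
  rw [show (∑ T ∈ (univ : Finset V).powerset, nu p univ T * (if A ⊆ T then w A else 0)) =
    ∑ T ∈ (univ : Finset V).powerset, nu p univ T * (if A ⊆ T then (fun _ => w A) (T \ A) else 0)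
    from rfl, cond (subset_univ A) (fun _ => w A), ← Finset.sum_mul, sum_nu, one_mul]
  ring

lemma key {p : ℝ} (hp0 : 0 ≤ p) (hp1 : p ≤ 1) {w : Finset V → ℝ} (hw : ∀ A, 0 ≤ w A)
    {s : ℝ} (hs : 0 ≤ s) :
    ((∑ A ∈ (univ : Finset V).powerset, w A * p ^ A.card) -
        s * ∑ A ∈ (univ : Finset V).powerset, w A * SA p w A) * psi p w s ≤
      ∑ T ∈ (univ : Finset V).powerset, nu p univ T * (XX w T * Real.exp (-(s * XX w T))) := by
  have hR : ∑ T ∈ (univ : Finset V).powerset, nu p univ T * (XX w T * Real.exp (-(s * XX w T))) =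
      ∑ A ∈ (univ : Finset V).powerset, w A * ∑ T ∈ (univ : Finset V).powerset,
        nu p univ T * (if A ⊆ T then Real.exp (-(s * XX w T)) else 0) := by
    have h1 : ∀ T ∈ (univ : Finset V).powerset,
        nu p univ T * (XX w T * Real.exp (-(s * XX w T))) =
        ∑ A ∈ (univ : Finset V).powerset,
          w A * (nu p univ T * (if A ⊆ T then Real.exp (-(s * XX w T)) else 0)) := by
      intro T _
      rw [XX, Finset.sum_mul, Finset.mul_sum]
      apply Finset.sum_congr rfl; intro A _
      split_ifs with h
      · ring
      · ring
    rw [Finset.sum_congr rfl h1, Finset.sum_comm]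
    exact Finset.sum_congr rfl (fun A _ => by rw [Finset.mul_sum])
  have expand : ((∑ A ∈ (univ : Finset V).powerset, w A * p ^ A.card) -
      s * ∑ A ∈ (univ : Finset V).powerset, w A * SA p w A) * psi p w s =
      ∑ A ∈ (univ : Finset V).powerset, w A * (psi p w s * (p ^ A.card - s * SA p w A)) := by
    rw [sub_mul, Finset.sum_mul, Finset.mul_sum, Finset.sum_mul, ← Finset.sum_sub_distrib]
    exact Finset.sum_congr rfl (fun A _ => by ring)
  rw [hR, expand]
  exact Finset.sum_le_sum (fun A _ => mul_le_mul_of_nonneg_left (perA hp0 hp1 hw hs A) (hw A))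


lemma psi_pos {p : ℝ} (hp0 : 0 ≤ p) (hp1 : p ≤ 1) (w : Finset V → ℝ) (s : ℝ) :
    0 < psi p w s := by
  obtain ⟨T0, hT0m, hT0⟩ : ∃ T ∈ (univ : Finset V).powerset, (0:ℝ) < nu p univ T := by
    apply Finset.exists_lt_of_sum_lt (f := fun _ => (0:ℝ))
    rw [sum_nu p (univ : Finset V), Finset.sum_const_zero]
    exact one_pos
  have h1 : (0:ℝ) < nu p univ T0 * Real.exp (-(s * XX w T0)) :=
    mul_pos hT0 (Real.exp_pos _)
  refine lt_of_lt_of_le h1 ?_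
  apply Finset.single_le_sum (f := fun T => nu p univ T * Real.exp (-(s * XX w T))) _ hT0m
  intro T _
  exact mul_nonneg (nu_nonneg hp0 hp1 _ _) (Real.exp_nonneg _)

lemma psi_deriv (p : ℝ) (w : Finset V → ℝ) (s : ℝ) :
    HasDerivAt (psi p w)
      (-(∑ T ∈ (univ : Finset V).powerset,
          nu p univ T * (XX w T * Real.exp (-(s * XX w T))))) s := by
  have h : ∀ T ∈ (univ : Finset V).powerset,
      HasDerivAt (fun s : ℝ => nu p univ T * Real.exp (-(s * XX w T)))
        (nu p univ T * (Real.exp (-(s * XX w T)) * -(XX w T))) s := by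
    intro T _
    exact (((hasDerivAt_mul_const (XX w T)).neg).exp).const_mul _
  have h2 := HasDerivAt.sum h
  have h3 : (∑ T ∈ (univ : Finset V).powerset,
      nu p univ T * (Real.exp (-(s * XX w T)) * -(XX w T))) =
      -(∑ T ∈ (univ : Finset V).powerset,
        nu p univ T * (XX w T * Real.exp (-(s * XX w T)))) := by
    rw [← Finset.sum_neg_distrib]
    exact Finset.sum_congr rfl (fun T _ => by ring)
  rw [h3] at h2
  have e : psi p w = ∑ T ∈ (univ : Finset V).powerset,
      fun s : ℝ => nu p univ T * Real.exp (-(s * XX w T)) := by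
    funext x
    rw [Finset.sum_apply]
    rfl
  rw [e]
  exact h2

lemma psi_le {p : ℝ} (hp0 : 0 ≤ p) (hp1 : p ≤ 1) {w : Finset V → ℝ} (hw : ∀ A, 0 ≤ w A)
    {l : ℝ} (hl : 0 ≤ l) :
    psi p w l ≤ Real.exp (l ^ 2 * (∑ A ∈ (univ : Finset V).powerset, w A * SA p w A) / 2 -
      l * ∑ A ∈ (univ : Finset V).powerset, w A * p ^ A.card) := by
  set E : ℝ := ∑ A ∈ (univ : Finset V).powerset, w A * p ^ A.card with hE
  set D : ℝ := ∑ A ∈ (univ : Finset V).powerset, w A * SA p w A with hD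
  set F : ℝ → ℝ := fun s => Real.log (psi p w s) + s * E - s ^ 2 * D / 2 with hF
  have hψpos : ∀ s, 0 < psi p w s := psi_pos hp0 hp1 w
  have hFd : ∀ s : ℝ, HasDerivAt F
      ((-(∑ T ∈ (univ : Finset V).powerset,
          nu p univ T * (XX w T * Real.exp (-(s * XX w T))))) / psi p w s + E - s * D) s := by
    intro s
    have h1 := (psi_deriv p w s).log (hψpos s).ne'
    have h2 : HasDerivAt (fun s : ℝ => s * E) E s := hasDerivAt_mul_const E
    have h3 : HasDerivAt (fun s : ℝ => s ^ 2 * D / 2) (s * D) s := by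
      have h4 := ((hasDerivAt_pow 2 s).mul_const D).div_const 2
      exact h4.congr_deriv (by norm_num; ring)
    exact (h1.add h2).sub h3
  have hFanti : AntitoneOn F (Set.Icc 0 l) := by
    apply antitoneOn_of_deriv_nonpos (convex_Icc 0 l)
    · exact fun s _ => ((hFd s).continuousAt).continuousWithinAt
    · exact fun s _ => ((hFd s).differentiableAt).differentiableWithinAt
    · intro s hs
      rw [interior_Icc] at hs
      rw [(hFd s).deriv]
      have hs0 : 0 ≤ s := le_of_lt hs.1
      have hk := key hp0 hp1 hw hs0
      have hψ := hψpos s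
      have h5 : E - s * D ≤ (∑ T ∈ (univ : Finset V).powerset,
          nu p univ T * (XX w T * Real.exp (-(s * XX w T)))) / psi p w s :=
        (le_div_iff₀ hψ).2 hk
      rw [neg_div]
      linarith
  have h0l : F l ≤ F 0 := hFanti (Set.left_mem_Icc.2 hl) (Set.right_mem_Icc.2 hl) hl
  have hψ0 : psi p w 0 = 1 := by
    rw [psi]
    have : ∀ T ∈ (univ : Finset V).powerset,
        nu p univ T * Real.exp (-(0 * XX w T)) = nu p univ T := by
      intro T _; rw [zero_mul, neg_zero, Real.exp_zero, mul_one]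
    rw [Finset.sum_congr rfl this, sum_nu]
  have hF0 : F 0 = 0 := by
    simp only [hF, hψ0, Real.log_one]
    ring
  have hlog : Real.log (psi p w l) ≤ l ^ 2 * D / 2 - l * E := by
    simp only [hF] at h0l
    rw [hψ0, Real.log_one] at h0l
    nlinarith [h0l]
  calc psi p w l = Real.exp (Real.log (psi p w l)) := (Real.exp_log (hψpos l)).symm
    _ ≤ _ := Real.exp_le_exp.2 hlog


end Janson


open Janson in
/-- Weighted Janson inequality: let `V_p` be the binomial random subset of a finite
nonempty set `V` (each element included independently with probability `p`), let
`w : 𝒫(V) → ℝ≥0` be a weight function, `X = ∑_A w(A) 𝟙[A ⊆ V_p]`, and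
`Δ = ∑_{A∩B≠∅} w(A)w(B) ℙ(A∪B ⊆ V_p)`. Then for `t ∈ [0, 𝔼X]`,
`ℙ(X ≤ 𝔼X - t) ≤ exp(-t²/(2Δ))`. Probabilities and expectations are spelled out
explicitly over the `2^|V|` outcomes `T ⊆ V`, with
`ℙ(V_p = T) = p^|T| (1-p)^{|V|-|T|}` and `ℙ(A ⊆ V_p) = p^|A|`. -/

theorem stmt_11 {V : Type*} [Fintype V] [DecidableEq V] [Nonempty V]
    (p : ℝ) (hp0 : 0 ≤ p) (hp1 : p ≤ 1)
    (w : Finset V → ℝ) (hw : ∀ A, 0 ≤ w A) (t : ℝ) :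
    let μ : Finset V → ℝ := fun T => p ^ T.card * (1 - p) ^ (Fintype.card V - T.card)
    let X : Finset V → ℝ := fun T => ∑ A ∈ (univ : Finset V).powerset,
      (if A ⊆ T then w A else 0)
    let EX : ℝ := ∑ T ∈ (univ : Finset V).powerset, μ T * X T
    let Δ : ℝ := ∑ A ∈ (univ : Finset V).powerset, ∑ B ∈ (univ : Finset V).powerset,
      (if (A ∩ B).Nonempty then w A * w B * p ^ (A ∪ B).card else 0)
    0 ≤ t → t ≤ EX →
      ∑ T ∈ ((univ : Finset V).powerset.filter (fun T => X T ≤ EX - t)), μ T ≤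
        Real.exp (-t ^ 2 / (2 * Δ)) := by
  intro μ X EX Δ ht htE
  classical
  have hμ' : ∀ T : Finset V, μ T = nu p univ T := by
    intro T; simp [μ, Janson.nu, Finset.card_univ]
  have hX : ∀ T, X T = XX w T := fun T => rfl
  have hμnn : ∀ T : Finset V, 0 ≤ μ T := by
    intro T; rw [hμ' T]; exact nu_nonneg hp0 hp1 _ _
  have hEX : EX = ∑ A ∈ (univ : Finset V).powerset, w A * p ^ A.card := by
    have h1 : EX = ∑ T ∈ (univ : Finset V).powerset, nu p univ T * XX w T := by
      apply Finset.sum_congr rfl; intro T _; rw [hμ' T, hX T]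
    rw [h1, EXeq]
  have hΔ : Δ = ∑ A ∈ (univ : Finset V).powerset, w A * SA p w A := by
    apply Finset.sum_congr rfl; intro A _
    rw [SA, Finset.mul_sum]
    apply Finset.sum_congr rfl; intro B _
    split_ifs with h
    · ring
    · ring
  have hΔnn : 0 ≤ Δ := by
    apply Finset.sum_nonneg; intro A _
    apply Finset.sum_nonneg; intro B _
    split_ifs with h
    · exact mul_nonneg (mul_nonneg (hw A) (hw B)) (pow_nonneg hp0 _)
    · exact le_rfl
  have hsum1 : ∑ T ∈ (univ : Finset V).powerset, μ T = 1 := by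
    rw [Finset.sum_congr rfl (fun T _ => hμ' T), sum_nu]
  rcases eq_or_lt_of_le hΔnn with hΔ0 | hΔpos
  · have hrhs : Real.exp (-t ^ 2 / (2 * Δ)) = 1 := by
      rw [← hΔ0, mul_zero, div_zero, Real.exp_zero]
    rw [hrhs, ← hsum1]
    exact Finset.sum_le_sum_of_subset_of_nonneg (Finset.filter_subset _ _)
      (fun T hT _ => hμnn T)
  · set l : ℝ := t / Δ with hl
    have hl0 : 0 ≤ l := div_nonneg ht hΔpos.le
    have hψl : psi p w l ≤ Real.exp (l ^ 2 * Δ / 2 - l * EX) := by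
      rw [hEX, hΔ]
      exact psi_le hp0 hp1 hw hl0
    calc ∑ T ∈ ((univ : Finset V).powerset.filter (fun T => X T ≤ EX - t)), μ T
        ≤ ∑ T ∈ ((univ : Finset V).powerset.filter (fun T => X T ≤ EX - t)),
            μ T * Real.exp (l * (EX - t) + -(l * X T)) := by
          apply Finset.sum_le_sum; intro T hT
          rw [Finset.mem_filter] at hT
          have h1 : 0 ≤ l * (EX - t) + -(l * X T) := by
            have h2 : l * (EX - t) + -(l * X T) = l * ((EX - t) - X T) := by ring
            rw [h2]
            exact mul_nonneg hl0 (by linarith [hT.2])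
          have h3 := Real.add_one_le_exp (l * (EX - t) + -(l * X T))
          calc μ T = μ T * 1 := (mul_one _).symm
            _ ≤ μ T * Real.exp (l * (EX - t) + -(l * X T)) :=
                mul_le_mul_of_nonneg_left (by linarith) (hμnn T)
      _ ≤ ∑ T ∈ (univ : Finset V).powerset, μ T * Real.exp (l * (EX - t) + -(l * X T)) :=
          Finset.sum_le_sum_of_subset_of_nonneg (Finset.filter_subset _ _)
            (fun T _ _ => mul_nonneg (hμnn T) (Real.exp_nonneg _))
      _ = Real.exp (l * (EX - t)) * psi p w l := by
          rw [psi, Finset.mul_sum]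
          apply Finset.sum_congr rfl; intro T _
          rw [Real.exp_add, hμ' T, hX T]; ring
      _ ≤ Real.exp (l * (EX - t)) * Real.exp (l ^ 2 * Δ / 2 - l * EX) :=
          mul_le_mul_of_nonneg_left hψl (Real.exp_nonneg _)
      _ = Real.exp (-t ^ 2 / (2 * Δ)) := by
          rw [← Real.exp_add]
          congr 1
          rw [hl]
          field_simp
          ring
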